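/- Let A' ∈ GL(d, ℤ), d ≥ 3, with Galois group of χ_{A'} equal to the full symmetric group S_d, and let λ_i, λ_j be two distinct roots of χ_{A'}. If λ_i^N ∈ ℚ(λ_j) for some N ∈ ℕ, then λ_i^N = ±1. Consequently, if additionally χ_{A'} is not cyclotomic, no ratio λ_i^N = λ_j^N can occur for i ≠ j, i.e. no ratio of eigenvalues of A' is a root of unity. -/

import Mathlib

lemma aux_swap_gen {α : Type*} [DecidableEq α] [Finite α] {a b c : α}
    (hab : a ≠ b) (hca : c ≠ a) (hcb : c ≠ b) :
    (⊤ : Subgroup (Equiv.Perm α)) ≤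
      Subgroup.closure {g : Equiv.Perm α | g a = a ∨ g b = b} := by
  rw [← Equiv.Perm.closure_isSwap, Subgroup.closure_le]
  rintro g ⟨x, y, hxy, rfl⟩
  have hswapab : Equiv.swap a b ∈ Subgroup.closure {g : Equiv.Perm α | g a = a ∨ g b = b} := by
    have key : Equiv.swap c b * Equiv.swap a c * Equiv.swap c b = Equiv.swap b a :=
      Equiv.swap_mul_swap_mul_swap (Ne.symm hca) hab
    rw [Equiv.swap_comm a b, ← key]
    refine Subgroup.mul_mem _ (Subgroup.mul_mem _ ?_ ?_) ?_ <;> apply Subgroup.subset_closure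
    · exact Or.inl (Equiv.swap_apply_of_ne_of_ne (Ne.symm hca) hab)
    · exact Or.inr (Equiv.swap_apply_of_ne_of_ne (Ne.symm hab) (Ne.symm hcb))
    · exact Or.inl (Equiv.swap_apply_of_ne_of_ne (Ne.symm hca) hab)
  rcases eq_or_ne a x with rfl | hax
  · rcases eq_or_ne b y with rfl | hby
    · exact hswapab
    · exact Subgroup.subset_closure
        (Or.inr (Equiv.swap_apply_of_ne_of_ne (Ne.symm hab) hby))
  · rcases eq_or_ne a y with rfl | hay
    · rcases eq_or_ne b x with rfl | hbx
      · rw [Equiv.swap_comm]; exact hswapab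
      · exact Subgroup.subset_closure
          (Or.inr (Equiv.swap_apply_of_ne_of_ne hbx (Ne.symm hab)))
    · exact Subgroup.subset_closure (Or.inl (Equiv.swap_apply_of_ne_of_ne hax hay))

theorem stmt_18 (d : ℕ) (hd : 3 ≤ d) (A' : Matrix (Fin d) (Fin d) ℤ) (hA : IsUnit A')
    (f : Polynomial ℚ) (hf : f = (A'.charpoly).map (Int.castRingHom ℚ))
    [hfact : Fact ((f.map (algebraMap ℚ ℂ)).Splits)]
    (hcard : Nat.card (f.rootSet ℂ) = d)
    (hGal : Function.Surjective (Polynomial.Gal.galActionHom f ℂ))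
    (lam mu : ℂ) (hlam : lam ∈ f.rootSet ℂ) (hmu : mu ∈ f.rootSet ℂ) (hne : lam ≠ mu) :
    (∀ N : ℕ, 0 < N → (∃ q : Polynomial ℚ, Polynomial.aeval mu q = lam ^ N) →
      lam ^ N = 1 ∨ lam ^ N = -1) ∧
    ((∀ n : ℕ, f ≠ Polynomial.cyclotomic n ℚ) →
      ∀ N : ℕ, 0 < N → lam ^ N ≠ mu ^ N) := by
  classical
  set K := f.SplittingField with hK
  -- basic facts about f
  have hcmono := A'.charpoly_monic
  have hmono : f.Monic := hf ▸ hcmono.map (Int.castRingHom ℚ)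
  have hdeg : f.natDegree = d := by
    rw [hf, hcmono.natDegree_map, Matrix.charpoly_natDegree_eq_dim, Fintype.card_fin]
  have hfne : f ≠ 0 := hmono.ne_zero
  -- constant coefficient is ±1
  have hc0 : f.coeff 0 = 1 ∨ f.coeff 0 = -1 := by
    have hdet : IsUnit A'.det := (Matrix.isUnit_iff_isUnit_det A').mp hA
    have h1 : A'.det = (-1) ^ d * A'.charpoly.coeff 0 := by
      simpa using A'.det_eq_sign_charpoly_coeff
    have hu : IsUnit (A'.charpoly.coeff 0) := by
      have h2 : (-1 : ℤ) ^ d * A'.det = A'.charpoly.coeff 0 := by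
        rw [h1, ← mul_assoc, ← mul_pow, neg_mul_neg, one_mul, one_pow, one_mul]
      exact h2 ▸ ((isUnit_one.neg.pow d).mul hdet)
    have h2 : f.coeff 0 = ((A'.charpoly.coeff 0 : ℤ) : ℚ) := by
      rw [hf, Polynomial.coeff_map]; rfl
    rcases Int.isUnit_iff.mp hu with h | h <;> rw [h2, h] <;> simp
  -- the roots dictionary between K and ℂ
  let e := Polynomial.Gal.rootsEquivRoots f ℂ
  let a : f.rootSet ℂ := ⟨lam, hlam⟩
  let b : f.rootSet ℂ := ⟨mu, hmu⟩
  have hab : a ≠ b := fun h => hne (congrArg Subtype.val h)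
  let la : K := (e.symm a : f.rootSet K)
  let mb : K := (e.symm b : f.rootSet K)
  have hval : ∀ w : f.rootSet K, ((e w : f.rootSet ℂ) : ℂ) = algebraMap K ℂ (w : K) := fun w => rfl
  have hφla : algebraMap K ℂ la = lam := by
    have := congrArg Subtype.val (e.apply_symm_apply a)
    exact (hval (e.symm a)).symm.trans this
  have hφmb : algebraMap K ℂ mb = mu := by
    have := congrArg Subtype.val (e.apply_symm_apply b)
    exact (hval (e.symm b)).symm.trans this
  have hφinj : Function.Injective (algebraMap K ℂ) := (algebraMap K ℂ).injective
  have hφaeval : ∀ (y : K) (p : Polynomial ℚ),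
      Polynomial.aeval (algebraMap K ℂ y) p = algebraMap K ℂ (Polynomial.aeval y p) :=
    fun y p => Polynomial.aeval_algHom_apply (IsScalarTower.toAlgHom ℚ K ℂ) y p
  have hσaeval : ∀ (σ : f.Gal) (y : K) (p : Polynomial ℚ),
      Polynomial.aeval (σ y) p = σ (Polynomial.aeval y p) :=
    fun σ y p => Polynomial.aeval_algHom_apply σ y p
  -- smul compat: value of σ • w
  have hsmulval : ∀ (σ : f.Gal) (w : f.rootSet K), ((σ • w : f.rootSet K) : K) = σ (w : K) :=
    fun σ w => rfl
  -- conjugation: every root of f in ℂ is the image of σ la for some σ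
  have hconj : ∀ z ∈ f.rootSet ℂ, ∃ σ : f.Gal, z = algebraMap K ℂ (σ la) := by
    intro z hz
    obtain ⟨σ, hσ⟩ := hGal (Equiv.swap a ⟨z, hz⟩)
    refine ⟨σ, ?_⟩
    have h1 : σ • a = (⟨z, hz⟩ : f.rootSet ℂ) := by
      have : Polynomial.Gal.galActionHom f ℂ σ a = σ • a := rfl
      rw [← this, hσ, Equiv.swap_apply_left]
    have h2 : (e (σ • e.symm a) : ℂ) = z := by
      rw [← Polynomial.Gal.smul_def, h1]
    exact h2.symm.trans ((hval _).trans (congrArg _ (hsmulval _ _)))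
  -- a third root
  obtain ⟨c, hca, hcb⟩ : ∃ c : f.rootSet ℂ, c ≠ a ∧ c ≠ b := by
    by_contra h
    push_neg at h
    have hsub : (Finset.univ : Finset (f.rootSet ℂ)) ⊆ {a, b} := by
      intro x _
      rcases eq_or_ne x a with rfl | hxa
      · simp
      · simp [h x hxa]
    have hle := Finset.card_le_card hsub
    rw [Finset.card_univ] at hle
    have h2 : Fintype.card (f.rootSet ℂ) ≤ 2 :=
      le_trans hle (le_trans (Finset.card_insert_le a {b}) (by simp))
    rw [Nat.card_eq_fintype_card] at hcard
    omega
  -- Galois theory instances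
  haveI : IsGalois ℚ K := by
    show IsGalois ℚ f.SplittingField
    exact @IsGalois.mk _ _ _ _ _ inferInstance (by exact Polynomial.SplittingField.instNormal f)
  -- main key statement
  have key : ∀ N : ℕ, 0 < N → (∃ q : Polynomial ℚ, Polynomial.aeval mu q = lam ^ N) →
      lam ^ N = 1 ∨ lam ^ N = -1 := by
    rintro N hN ⟨q, hq⟩
    set x : K := la ^ N with hx
    have hx_mu : x = Polynomial.aeval mb q := by
      apply hφinj
      rw [map_pow, hφla, ← hq, ← hφmb, hφaeval]
    -- x is fixed by the whole Galois group
    have hfix : ∀ σ : f.Gal, σ x = x := by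
      have himg : {g : Equiv.Perm (f.rootSet ℂ) | g a = a ∨ g b = b} ⊆
          ↑((MulAction.stabilizer f.Gal x).map (Polynomial.Gal.galActionHom f ℂ)) := by
        intro g hg
        obtain ⟨σ, rfl⟩ := hGal g
        refine ⟨σ, ?_, rfl⟩
        have hperm : ∀ w : f.rootSet ℂ, Polynomial.Gal.galActionHom f ℂ σ w = σ • w := fun _ => rfl
        rcases hg with h | h
        · have h1 : σ • (e.symm a) = e.symm a := by
            apply e.injective
            rw [← Polynomial.Gal.smul_def, ← hperm, h]
            exact (e.apply_symm_apply a).symm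
          have hσla : σ la = la := by
            have := congrArg Subtype.val h1
            exact (hsmulval σ (e.symm a)).symm.trans this
          show σ • x = x
          change σ x = x
          rw [hx, map_pow, hσla]
        · have h1 : σ • (e.symm b) = e.symm b := by
            apply e.injective
            rw [← Polynomial.Gal.smul_def, ← hperm, h]
            exact (e.apply_symm_apply b).symm
          have hσmb : σ mb = mb := by
            have := congrArg Subtype.val h1
            exact (hsmulval σ (e.symm b)).symm.trans this
          show σ • x = x
          change σ x = x
          rw [hx_mu, ← hσaeval, hσmb]
      intro σ
      have htop := aux_swap_gen hab hca hcb (Subgroup.mem_top (Polynomial.Gal.galActionHom f ℂ σ))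
      have hmem : Polynomial.Gal.galActionHom f ℂ σ ∈
          (MulAction.stabilizer f.Gal x).map (Polynomial.Gal.galActionHom f ℂ) :=
        (Subgroup.closure_le _).mpr himg htop
      obtain ⟨τ, hτ, hτσ⟩ := hmem
      have : τ = σ := Polynomial.Gal.galActionHom_injective f ℂ hτσ
      exact this ▸ hτ
    -- hence x is rational
    obtain ⟨r, hr⟩ : ∃ r : ℚ, algebraMap ℚ K r = x := by
      have hbot : x ∈ (⊥ : IntermediateField ℚ K) := by
        rw [← IsGalois.fixedField_fixingSubgroup (⊥ : IntermediateField ℚ K)]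
        exact fun g => hfix g.1
      exact IntermediateField.mem_bot.mp hbot
    -- every root z of f satisfies z ^ N = r
    have hroot : ∀ z ∈ f.rootSet ℂ, z ^ N = algebraMap ℚ ℂ r := by
      intro z hz
      obtain ⟨σ, hσ⟩ := hconj z hz
      rw [hσ, ← map_pow, ← map_pow, ← hx, hfix σ, ← hr,
        ← IsScalarTower.algebraMap_apply]
    -- product over all roots gives r ^ d = ±1
    have hrd : r ^ d = 1 ∨ r ^ d = -1 := by
      set fm := f.map (algebraMap ℚ ℂ) with hfm
      have hfm_monic : fm.Monic := hmono.map _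
      have hsplit : fm.Splits := hfact.1
      have hfmdeg : fm.natDegree = d := by rw [hfm, hmono.natDegree_map, hdeg]
      have hcroots : Multiset.card fm.roots = d := by
        rw [Polynomial.splits_iff_card_roots.mp hsplit]; exact hfmdeg
      have hcoeff := hsplit.coeff_zero_eq_prod_roots_of_monic hfm_monic
      have hcoeff0 : fm.coeff 0 = algebraMap ℚ ℂ (f.coeff 0) := by
        rw [hfm, Polynomial.coeff_map]
      have hprod1 : fm.roots.prod = 1 ∨ fm.roots.prod = -1 := by
        have h1 : fm.coeff 0 = 1 ∨ fm.coeff 0 = -1 := by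
          rcases hc0 with h | h <;> rw [hcoeff0, h] <;> simp
        have h2 : fm.roots.prod = (-1) ^ d * fm.coeff 0 := by
          rw [hcoeff, hfmdeg, ← mul_assoc, ← mul_pow]
          simp
        rcases h1 with h | h <;> rw [h2, h] <;> rcases Nat.even_or_odd d with he | he
        · left; simp [he.neg_one_pow]
        · right; simp [he.neg_one_pow]
        · right; simp [he.neg_one_pow]
        · left; simp [he.neg_one_pow]
      have hpow : fm.roots.prod ^ N = algebraMap ℚ ℂ r ^ d := by
        have hmap : Multiset.map (fun z => z ^ N) fm.roots
            = Multiset.replicate d (algebraMap ℚ ℂ r) := by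
          rw [← hcroots, ← Multiset.card_map (fun z => z ^ N) fm.roots]
          apply Multiset.eq_replicate_card.mpr
          intro w hw
          obtain ⟨z, hz, rfl⟩ := Multiset.mem_map.mp hw
          refine hroot z ?_
          rw [Polynomial.mem_rootSet']
          constructor
          · rw [← hfm]; exact hfm_monic.ne_zero
          · rw [Polynomial.aeval_def, Polynomial.eval₂_eq_eval_map, ← hfm]
            exact Polynomial.isRoot_of_mem_roots hz
        have h3 := congrArg Multiset.prod hmap
        rw [Multiset.prod_replicate] at h3
        calc fm.roots.prod ^ N = (fm.roots.map id).prod ^ N := by rw [Multiset.map_id]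
          _ = (fm.roots.map (fun z => id z ^ N)).prod := Multiset.prod_map_pow.symm
          _ = algebraMap ℚ ℂ r ^ d := by simpa using h3
      have hcd : algebraMap ℚ ℂ r ^ d = 1 ∨ algebraMap ℚ ℂ r ^ d = -1 := by
        rcases hprod1 with h | h
        · left; rw [← hpow, h, one_pow]
        · rcases Nat.even_or_odd N with he | he
          · left; rw [← hpow, h, he.neg_one_pow]
          · right; rw [← hpow, h, he.neg_one_pow]
      rcases hcd with h | h
      · left; apply (algebraMap ℚ ℂ).injective; rw [map_pow, h, map_one]
      · right; apply (algebraMap ℚ ℂ).injective; rw [map_pow, h, map_neg, map_one]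
    -- conclude
    have hlamN : lam ^ N = algebraMap ℚ ℂ r := hroot lam hlam
    have hd0 : d ≠ 0 := by omega
    rcases hrd with h | h
    · rcases (pow_eq_one_iff_of_ne_zero hd0).mp h with h1 | ⟨h1, _⟩
      · left; rw [hlamN, h1, map_one]
      · right; rw [hlamN, h1, map_neg, map_one]
    · rcases (pow_eq_neg_one_iff).mp h with ⟨h1, _⟩
      right; rw [hlamN, h1, map_neg, map_one]
  refine ⟨key, ?_⟩
  -- second part
  intro hcyc N hN heq
  have h1 : lam ^ N = 1 ∨ lam ^ N = -1 :=
    key N hN ⟨Polynomial.X ^ N, by rw [map_pow, Polynomial.aeval_X, heq]⟩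
  have h2 : lam ^ (2 * N) = 1 := by
    rw [mul_comm, pow_mul]
    rcases h1 with h | h <;> rw [h] <;> ring
  have hfin : IsOfFinOrder lam := isOfFinOrder_iff_pow_eq_one.mpr ⟨2 * N, by omega, h2⟩
  have hnpos : 0 < orderOf lam := hfin.orderOf_pos
  have hprim : IsPrimitiveRoot lam (orderOf lam) := IsPrimitiveRoot.orderOf lam
  have hcyclo : Polynomial.cyclotomic (orderOf lam) ℚ = minpoly ℚ lam :=
    Polynomial.cyclotomic_eq_minpoly_rat hprim hnpos
  have haev : Polynomial.aeval lam f = 0 := (Polynomial.mem_rootSet.mp hlam).2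
  have hint : IsIntegral ℚ lam := ⟨f, hmono, by rwa [← Polynomial.aeval_def]⟩
  have hfmin : f = minpoly ℚ lam := by
    have hdvd : minpoly ℚ lam ∣ f := minpoly.dvd ℚ lam haev
    refine Polynomial.eq_of_monic_of_dvd_of_natDegree_le (minpoly.monic hint) hmono hdvd ?_
    have hla0 : Polynomial.aeval la (minpoly ℚ lam) = 0 := by
      apply hφinj
      rw [map_zero, ← hφaeval, hφla, minpoly.aeval]
    have hsub : f.rootSet ℂ ⊆ (minpoly ℚ lam).rootSet ℂ := by
      intro z hz
      obtain ⟨σ, hσ⟩ := hconj z hz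
      rw [Polynomial.mem_rootSet]
      refine ⟨minpoly.ne_zero hint, ?_⟩
      rw [hσ, hφaeval, hσaeval, hla0, map_zero, map_zero]
    have hle : d ≤ Nat.card ((minpoly ℚ lam).rootSet ℂ) := by
      rw [← hcard, Nat.card_coe_set_eq, Nat.card_coe_set_eq]
      exact Set.ncard_le_ncard hsub ((minpoly ℚ lam).rootSet_finite ℂ)
    have hle2 : Nat.card ((minpoly ℚ lam).rootSet ℂ) ≤ (minpoly ℚ lam).natDegree := by
      rw [Nat.card_coe_set_eq, Polynomial.rootSet, Set.ncard_coe_finset]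
      refine le_trans (Multiset.toFinset_card_le _) ?_
      refine le_trans (Polynomial.card_roots' _) ?_
      rw [Polynomial.natDegree_map]
    rw [hdeg]
    exact le_trans hle hle2
  exact hcyc (orderOf lam) (hfmin.trans hcyclo.symm)
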